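/- Let n ≥ 1 be an integer, let K ⊆ ℝ^{n+1} be a compact set, let y ∈ ℝ^{n+1} and let 0 < m ≤ M be real numbers such that the closed ball of radius m around y is contained in K and K is contained in the closed ball of radius M around y. Let S denote the sphere {z ∈ ℝ^{n+1} : ‖z − y‖ = (m + M)/2}. Then the frontier (topological boundary) ∂K of K is a nonempty compact set and the Hausdorff distance between ∂K and S is at most (M − m)/2. -/

import Mathlib

open Metric Set

lemma aux_frontier_meet {X : Type*} [TopologicalSpace X] {s K : Set X}
    (hs : IsPreconnected s) {a b : X} (ha : a ∈ s) (hb : b ∈ s)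
    (haK : a ∈ K) (hbK : b ∉ K) : (s ∩ frontier K).Nonempty := by
  by_contra h
  rw [Set.not_nonempty_iff_eq_empty] at h
  have hdisj : ∀ x ∈ s, x ∉ frontier K := fun x hx hxf =>
    Set.eq_empty_iff_forall_notMem.mp h x ⟨hx, hxf⟩
  have key := hs (interior K) (closure K)ᶜ isOpen_interior isClosed_closure.isOpen_compl
    (fun x hx => by
      rcases em (x ∈ closure K) with hc | hc
      · left
        rcases (closure_eq_interior_union_frontier K ▸ hc) with h1 | h1
        · exact h1
        · exact absurd h1 (hdisj x hx)
      · right; exact hc)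
    ⟨a, ha, by
      have : a ∈ closure K := subset_closure haK
      rcases (closure_eq_interior_union_frontier K ▸ this) with h1 | h1
      · exact h1
      · exact absurd h1 (hdisj a ha)⟩
    ⟨b, hb, fun hc => by
      rcases (closure_eq_interior_union_frontier K ▸ hc) with h1 | h1
      · exact hbK (interior_subset h1)
      · exact hdisj b hb h1⟩
  obtain ⟨x, -, hx1, hx2⟩ := key
  exact hx2 (subset_closure (interior_subset hx1))

/-- If a compact set `K ⊆ ℝ^{n+1}` is squeezed between concentric closed balls of radii
`0 < m ≤ M` around `y`, then `∂K` is a nonempty compact set whose Hausdorff distance to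
the middle sphere of radius `(m + M)/2` around `y` is at most `(M - m)/2`. -/
theorem stmt_10 (n : ℕ) (hn : 1 ≤ n)
    (K : Set (EuclideanSpace ℝ (Fin (n + 1)))) (hK : IsCompact K)
    (y : EuclideanSpace ℝ (Fin (n + 1))) (m M : ℝ)
    (hm : 0 < m) (hmM : m ≤ M)
    (hball : closedBall y m ⊆ K)
    (hsub : K ⊆ closedBall y M) :
    (frontier K).Nonempty ∧ IsCompact (frontier K) ∧
    hausdorffDist (frontier K) (sphere y ((m + M) / 2)) ≤ (M - m) / 2 := by
  set r : ℝ := (m + M) / 2 with hr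
  have hr0 : 0 < r := by rw [hr]; linarith
  have hKclosed : IsClosed K := hK.isClosed
  have hfK : frontier K ⊆ K := by
    rw [frontier, hKclosed.closure_eq]; exact Set.diff_subset
  have hballint : ball y m ⊆ interior K :=
    interior_maximal (ball_subset_closedBall.trans hball) isOpen_ball
  -- every frontier point has distance to y in [m, M]
  have hfd : ∀ x ∈ frontier K, m ≤ dist x y ∧ dist x y ≤ M := by
    intro x hx
    refine ⟨?_, mem_closedBall.mp (hsub (hfK hx))⟩
    by_contra h
    push_neg at h
    exact hx.2 (hballint (mem_ball.mpr h))
  -- nonemptiness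
  have hne : (frontier K).Nonempty := by
    rw [nonempty_frontier_iff]
    refine ⟨⟨y, hball (mem_closedBall_self hm.le)⟩, fun huniv => ?_⟩
    have : y + (M + 1) • (EuclideanSpace.single 0 (1 : ℝ)) ∈ closedBall y M :=
      hsub (huniv ▸ Set.mem_univ _)
    rw [mem_closedBall, dist_self_add_left, norm_smul, EuclideanSpace.norm_single,
      norm_one, mul_one, Real.norm_eq_abs, abs_of_pos (by linarith)] at this
    linarith
  refine ⟨hne, hK.of_isClosed_subset isClosed_frontier hfK, ?_⟩
  apply hausdorffDist_le_of_mem_dist (by linarith)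
  · -- each frontier point is close to the sphere
    intro x hx
    obtain ⟨h1, h2⟩ := hfd x hx
    have hd0 : 0 < dist x y := lt_of_lt_of_le hm h1
    refine ⟨y + (r / dist x y) • (x - y), ?_, ?_⟩
    · rw [mem_sphere, dist_self_add_left, norm_smul, Real.norm_eq_abs,
        abs_of_pos (by positivity)]
      rw [dist_eq_norm] at hd0 ⊢
      field_simp
    · simp only [dist_eq_norm] at h1 h2 hd0 ⊢
      have heq : x - (y + (r / ‖x - y‖) • (x - y)) = (1 - r / ‖x - y‖) • (x - y) := by
        module
      rw [heq, norm_smul, Real.norm_eq_abs]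
      have habs : |1 - r / ‖x - y‖| * ‖x - y‖ = |‖x - y‖ - r| := by
        rw [← abs_of_pos hd0, ← abs_mul]
        congr 1
        field_simp
        rw [abs_of_pos hd0]; ring
      rw [habs, abs_le]
      constructor <;> linarith [hr]
  · -- each sphere point is close to the frontier
    intro z hz
    rw [mem_sphere] at hz
    set u : EuclideanSpace ℝ (Fin (n + 1)) := (r⁻¹ : ℝ) • (z - y) with hu
    have hnu : ‖u‖ = 1 := by
      rw [hu, norm_smul, Real.norm_eq_abs, abs_of_pos (inv_pos.mpr hr0)]
      rw [dist_eq_norm] at hz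
      rw [hz]; field_simp
    set a := y + m • u with ha
    set b := y + (M + 1) • u with hb
    have haK : a ∈ K := hball (by
      rw [mem_closedBall, dist_self_add_left, norm_smul, hnu, mul_one,
        Real.norm_eq_abs, abs_of_pos hm])
    have hbK : b ∉ K := fun hbK => by
      have := mem_closedBall.mp (hsub hbK)
      rw [hb, dist_self_add_left, norm_smul, hnu, mul_one, Real.norm_eq_abs,
        abs_of_pos (by linarith)] at this
      linarith
    obtain ⟨x, hxseg, hxf⟩ := aux_frontier_meet
      ((convex_segment a b).isPreconnected) (left_mem_segment ℝ a b)
      (right_mem_segment ℝ a b) haK hbK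
    refine ⟨x, hxf, ?_⟩
    obtain ⟨c, d, hc, hd, hcd, hx⟩ := hxseg
    set t := c * m + d * (M + 1) with ht
    have hxeq : x = y + t • u := by
      have hstep : c • a + d • b = (c + d) • y + t • u := by
        rw [ha, hb, ht]; module
      rw [← hx, hstep, hcd, one_smul]
    have hzeq : z = y + r • u := by
      rw [hu]
      have : r • ((r⁻¹ : ℝ) • (z - y)) = z - y := by
        rw [smul_smul, mul_inv_cancel₀ hr0.ne']; simp
      rw [this]; abel
    have hdist : dist z x = |r - t| := by
      rw [dist_eq_norm, hxeq, hzeq]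
      have : y + r • u - (y + t • u) = (r - t) • u := by module
      rw [this, norm_smul, hnu, mul_one, Real.norm_eq_abs]
    have hdxy : dist x y = t := by
      rw [hxeq, dist_self_add_left, norm_smul, hnu, mul_one, Real.norm_eq_abs,
        abs_of_pos (by nlinarith)]
    obtain ⟨h1, h2⟩ := hfd x hxf
    rw [hdxy] at h1 h2
    rw [hdist, abs_le]
    constructor <;> linarith [hr]
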